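/- The Motzkin polynomial f(x,y) = x⁴y² + x²y⁴ - 3x²y² + 1 is not a sum of squares of polynomials in ℝ[x,y]. -/

import Mathlib

open MvPolynomial

/-- The Motzkin polynomial as an element of `ℝ[x,y]`. -/
noncomputable def motzkin : MvPolynomial (Fin 2) ℝ :=
  X 0 ^ 4 * X 1 ^ 2 + X 0 ^ 2 * X 1 ^ 4 - C 3 * X 0 ^ 2 * X 1 ^ 2 + 1

namespace MotzkinAux

open Finsupp

noncomputable def m2 (a b : ℕ) : Fin 2 →₀ ℕ := Finsupp.single 0 a + Finsupp.single 1 b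

lemma m2_apply0 (a b : ℕ) : m2 a b 0 = a := by
  simp [m2, Finsupp.single_apply]

lemma m2_apply1 (a b : ℕ) : m2 a b 1 = b := by
  simp [m2, Finsupp.single_apply]

lemma eq_m2 (β : Fin 2 →₀ ℕ) : β = m2 (β 0) (β 1) := by
  ext i
  fin_cases i
  · simp [m2_apply0]
  · simp [m2_apply1]

lemma m2_add (a b c d : ℕ) : m2 a b + m2 c d = m2 (a + c) (b + d) := by
  ext i; fin_cases i <;> simp [m2_apply0, m2_apply1]

lemma m2_inj {a b c d : ℕ} : m2 a b = m2 c d ↔ a = c ∧ b = d := by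
  constructor
  · intro h
    constructor
    · have := congrArg (fun f => f 0) h; simpa [m2_apply0] using this
    · have := congrArg (fun f => f 1) h; simpa [m2_apply1] using this
  · rintro ⟨rfl, rfl⟩; rfl

lemma motzkin_eq : motzkin = monomial (m2 4 2) 1 + monomial (m2 2 4) 1
    + monomial (m2 2 2) (-3) + monomial (m2 0 0) 1 := by
  rw [motzkin]
  simp only [X_pow_eq_monomial, monomial_mul, m2, one_mul]
  rw [show (1 : MvPolynomial (Fin 2) ℝ) = monomial (single (0 : Fin 2) 0 + single 1 0) 1 by simp]
  rw [show (C 3 : MvPolynomial (Fin 2) ℝ) * monomial (single (0:Fin 2) 2) 1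
        * monomial (single (1:Fin 2) 2) 1
      = monomial (single (0:Fin 2) 2 + single 1 2) 3 by
        rw [mul_assoc, monomial_mul, C_mul_monomial]; norm_num]
  rw [show ((-3:ℝ)) = -(3:ℝ) by norm_num, map_neg]; ring

lemma coeff_motzkin (n : Fin 2 →₀ ℕ) :
    coeff n motzkin = (if m2 4 2 = n then (1:ℝ) else 0) + (if m2 2 4 = n then 1 else 0)
      + (if m2 2 2 = n then (-3) else 0) + (if m2 0 0 = n then 1 else 0) := by
  rw [motzkin_eq]; simp [coeff_monomial]; split_ifs <;> norm_num

lemma motzkin_coeff_pos {n : Fin 2 →₀ ℕ} (h : 0 < coeff n motzkin) :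
    n = m2 0 0 ∨ n = m2 4 2 ∨ n = m2 2 4 := by
  rw [coeff_motzkin] at h
  by_cases h1 : m2 4 2 = n
  · exact Or.inr (Or.inl h1.symm)
  by_cases h2 : m2 2 4 = n
  · exact Or.inr (Or.inr h2.symm)
  by_cases h4 : m2 0 0 = n
  · exact Or.inl h4.symm
  · simp [h1, h2, h4] at h
    split_ifs at h <;> norm_num at h

def tp (β : Fin 2 →₀ ℕ) : ℕ ×ₗ ℕ := toLex (β 0 + β 1, β 0)

lemma max_sq_coeff {q : MvPolynomial (Fin 2) ℝ} {S : Finset (Fin 2 →₀ ℕ)} {α : Fin 2 →₀ ℕ}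
    (hs : q.support ⊆ S) (hmax : ∀ β ∈ S, tp β ≤ tp α) :
    coeff (α + α) (q * q) = coeff α q * coeff α q := by
  rw [coeff_mul]
  apply Finset.sum_eq_single (α, α)
  · rintro ⟨u, v⟩ hmem hne
    have hmem' : u + v = α + α :=
      (Finset.HasAntidiagonal.mem_antidiagonal (n := α + α) (a := (u, v))).mp hmem
    by_cases hu : u ∈ q.support
    · by_cases hv : v ∈ q.support
      · exfalso; apply hne
        have h1 := hmax u (hs hu); have h2 := hmax v (hs hv)
        have e0 : u 0 + v 0 = α 0 + α 0 := by
          have := congrArg (fun f => f 0) hmem'; simpa using this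
        have e1 : u 1 + v 1 = α 1 + α 1 := by
          have := congrArg (fun f => f 1) hmem'; simpa using this
        rw [tp, tp, Prod.Lex.le_iff] at h1 h2
        simp only [ofLex_toLex] at h1 h2
        have hu' : u 0 = α 0 ∧ u 1 = α 1 := by omega
        have hv' : v 0 = α 0 ∧ v 1 = α 1 := by omega
        have h1' : u = α := by rw [eq_m2 u, eq_m2 α, hu'.1, hu'.2]
        have h2' : v = α := by rw [eq_m2 v, eq_m2 α, hv'.1, hv'.2]
        rw [h1', h2']
      · rw [MvPolynomial.notMem_support_iff.mp hv, mul_zero]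
    · rw [MvPolynomial.notMem_support_iff.mp hu, zero_mul]
  · intro h; exact absurd ((Finset.HasAntidiagonal.mem_antidiagonal (n := α + α) (a := (α, α))).mpr rfl) h

lemma isSumSq_exists {p : MvPolynomial (Fin 2) ℝ} (h : IsSumSq p) :
    ∃ l : List (MvPolynomial (Fin 2) ℝ), p = (l.map (fun q => q * q)).sum := by
  induction h with
  | zero => exact ⟨[], rfl⟩
  | sq_add a _ ih =>
    obtain ⟨l, hl⟩ := ih
    exact ⟨a :: l, by simp [hl]⟩

lemma coeff_list_sum (m : Fin 2 →₀ ℕ) (L : List (MvPolynomial (Fin 2) ℝ)) :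
    coeff m L.sum = (L.map (coeff m)).sum := by
  induction L with
  | nil => simp
  | cons q L ih => simp [ih]

lemma list_sq_zero {α : Type*} (l : List α) (f : α → ℝ)
    (h : (l.map (fun x => f x * f x)).sum = 0) : ∀ x ∈ l, f x = 0 := by
  induction l with
  | nil => simp
  | cons a l ih =>
    simp only [List.map_cons, List.sum_cons] at h
    have h1 : 0 ≤ f a * f a := mul_self_nonneg _
    have h2 : 0 ≤ (l.map (fun x => f x * f x)).sum := by
      apply List.sum_nonneg
      intro x hx
      simp only [List.mem_map] at hx
      obtain ⟨y, _, rfl⟩ := hx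
      exact mul_self_nonneg _
    intro x hx
    rcases List.mem_cons.mp hx with rfl | hx'
    · nlinarith
    · exact ih (by linarith) x hx'

lemma list_sq_pos {α : Type*} (l : List α) (f : α → ℝ) (x : α) (hx : x ∈ l) (hfx : f x ≠ 0) :
    0 < (l.map (fun y => f y * f y)).sum := by
  induction l with
  | nil => simp at hx
  | cons a l ih =>
    simp only [List.map_cons, List.sum_cons]
    have h2 : 0 ≤ (l.map (fun y => f y * f y)).sum := by
      apply List.sum_nonneg
      intro y hy
      simp only [List.mem_map] at hy
      obtain ⟨z, _, rfl⟩ := hy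
      exact mul_self_nonneg _
    rcases List.mem_cons.mp hx with rfl | hx'
    · have : 0 < f x * f x := mul_self_pos.mpr hfx
      linarith
    · have := ih hx'
      nlinarith [mul_self_nonneg (f a)]

noncomputable def supps (l : List (MvPolynomial (Fin 2) ℝ)) : Finset (Fin 2 →₀ ℕ) :=
  l.foldr (fun q s => q.support ∪ s) ∅

lemma mem_supps {l : List (MvPolynomial (Fin 2) ℝ)} {β : Fin 2 →₀ ℕ} :
    β ∈ supps l ↔ ∃ q ∈ l, β ∈ q.support := by
  induction l with
  | nil => simp [supps]
  | cons a l ih =>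
    show β ∈ a.support ∪ supps l ↔ _
    rw [Finset.mem_union, ih]
    simp

def InT (β : Fin 2 →₀ ℕ) : Prop := β 0 + β 1 ≤ 2 ∨ (β 0 + β 1 = 3 ∧ β 0 ≤ 2)

lemma supp_T {l : List (MvPolynomial (Fin 2) ℝ)}
    (hl : motzkin = (l.map (fun q => q * q)).sum) :
    ∀ q ∈ l, ∀ β ∈ q.support, InT β := by
  intro q hq β hβ
  have hS : β ∈ supps l := mem_supps.mpr ⟨q, hq, hβ⟩
  obtain ⟨α, hαS, hmax⟩ := Finset.exists_max_image (supps l) tp ⟨β, hS⟩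
  have hsub : ∀ r ∈ l, r.support ⊆ supps l := by
    intro r hr x hx; exact mem_supps.mpr ⟨r, hr, hx⟩
  have key : coeff (α + α) motzkin = (l.map (fun r => coeff α r * coeff α r)).sum := by
    rw [hl, coeff_list_sum, List.map_map]
    congr 1
    apply List.map_congr_left
    intro r hr
    exact max_sq_coeff (hsub r hr) hmax
  obtain ⟨q', hq', hq's⟩ := mem_supps.mp hαS
  have hq'ne : coeff α q' ≠ 0 := MvPolynomial.mem_support_iff.mp hq's
  have hpos : 0 < coeff (α + α) motzkin := by
    rw [key]; exact list_sq_pos l _ q' hq' hq'ne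
  have hcomp : α 0 + α 1 ≤ 2 ∨ (α 0 + α 1 = 3 ∧ α 0 ≤ 2) := by
    rcases motzkin_coeff_pos hpos with hc | hc | hc <;>
    · have e0 := congrArg (fun f => f 0) hc
      have e1 := congrArg (fun f => f 1) hc
      simp [m2_apply0, m2_apply1, Finsupp.add_apply] at e0 e1
      omega
  have hb := hmax β hS
  rw [tp, tp, Prod.Lex.le_iff] at hb
  simp only [ofLex_toLex] at hb
  unfold InT
  omega

noncomputable def bigQ (a b c d e f g h k : ℝ) : MvPolynomial (Fin 2) ℝ :=
  monomial (m2 0 0) a + monomial (m2 1 0) b + monomial (m2 0 1) c + monomial (m2 2 0) d +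
  monomial (m2 1 1) e + monomial (m2 0 2) f + monomial (m2 0 3) g + monomial (m2 1 2) h +
  monomial (m2 2 1) k

set_option maxHeartbeats 1000000 in
lemma sq_coeffs (a b c d e f g h k : ℝ) :
    coeff (m2 0 6) (bigQ a b c d e f g h k * bigQ a b c d e f g h k) = g * g
  ∧ coeff (m2 4 0) (bigQ a b c d e f g h k * bigQ a b c d e f g h k) = d * d
  ∧ coeff (m2 0 4) (bigQ a b c d e f g h k * bigQ a b c d e f g h k) = f * f + 2*(c*g)
  ∧ coeff (m2 2 0) (bigQ a b c d e f g h k * bigQ a b c d e f g h k) = b * b + 2*(a*d)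
  ∧ coeff (m2 0 2) (bigQ a b c d e f g h k * bigQ a b c d e f g h k) = c * c + 2*(a*f)
  ∧ coeff (m2 2 2) (bigQ a b c d e f g h k * bigQ a b c d e f g h k)
      = e * e + 2*(k*c) + 2*(h*b) + 2*(d*f) := by
  unfold bigQ
  refine ⟨?_, ?_, ?_, ?_, ?_, ?_⟩ <;>
  · simp only [add_mul, mul_add, monomial_mul, m2_add, coeff_add, coeff_monomial, m2_inj]
    norm_num
    try ring

lemma InT_cases {m : Fin 2 →₀ ℕ} (h : InT m) :
    m = m2 0 0 ∨ m = m2 1 0 ∨ m = m2 0 1 ∨ m = m2 2 0 ∨ m = m2 1 1 ∨ m = m2 0 2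
      ∨ m = m2 0 3 ∨ m = m2 1 2 ∨ m = m2 2 1 := by
  obtain ⟨a, b, rfl⟩ : ∃ a b, m = m2 a b := ⟨m 0, m 1, eq_m2 m⟩
  unfold InT at h
  rw [m2_apply0, m2_apply1] at h
  simp only [m2_inj]
  omega

lemma rep {q : MvPolynomial (Fin 2) ℝ} (hs : ∀ β ∈ q.support, InT β) :
    q = bigQ (coeff (m2 0 0) q) (coeff (m2 1 0) q) (coeff (m2 0 1) q) (coeff (m2 2 0) q)
      (coeff (m2 1 1) q) (coeff (m2 0 2) q) (coeff (m2 0 3) q) (coeff (m2 1 2) q)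
      (coeff (m2 2 1) q) := by
  apply MvPolynomial.ext
  intro m
  unfold bigQ
  simp only [coeff_add, coeff_monomial]
  by_cases hm : coeff m q = 0
  · have z : ∀ a b : ℕ, (if m2 a b = m then coeff (m2 a b) q else 0) = 0 := by
      intro a b
      split
      · next hh => rw [hh, hm]
      · rfl
    rw [hm, z, z, z, z, z, z, z, z, z]
    norm_num
  · have hin := hs m (MvPolynomial.mem_support_iff.mpr hm)
    rcases InT_cases hin with hc | hc | hc | hc | hc | hc | hc | hc | hc <;>
      subst hc <;> simp [m2_inj]

lemma coeffs_sq {q : MvPolynomial (Fin 2) ℝ} (hs : ∀ β ∈ q.support, InT β) :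
    coeff (m2 0 6) (q*q) = coeff (m2 0 3) q * coeff (m2 0 3) q
  ∧ coeff (m2 4 0) (q*q) = coeff (m2 2 0) q * coeff (m2 2 0) q
  ∧ coeff (m2 0 4) (q*q) = coeff (m2 0 2) q * coeff (m2 0 2) q
      + 2*(coeff (m2 0 1) q * coeff (m2 0 3) q)
  ∧ coeff (m2 2 0) (q*q) = coeff (m2 1 0) q * coeff (m2 1 0) q
      + 2*(coeff (m2 0 0) q * coeff (m2 2 0) q)
  ∧ coeff (m2 0 2) (q*q) = coeff (m2 0 1) q * coeff (m2 0 1) q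
      + 2*(coeff (m2 0 0) q * coeff (m2 0 2) q)
  ∧ coeff (m2 2 2) (q*q) = coeff (m2 1 1) q * coeff (m2 1 1) q
      + 2*(coeff (m2 2 1) q * coeff (m2 0 1) q) + 2*(coeff (m2 1 2) q * coeff (m2 1 0) q)
      + 2*(coeff (m2 2 0) q * coeff (m2 0 2) q) := by
  have e := sq_coeffs (coeff (m2 0 0) q) (coeff (m2 1 0) q) (coeff (m2 0 1) q)
    (coeff (m2 2 0) q) (coeff (m2 1 1) q) (coeff (m2 0 2) q) (coeff (m2 0 3) q)
    (coeff (m2 1 2) q) (coeff (m2 2 1) q)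
  rw [← rep hs] at e
  exact e

end MotzkinAux

open MotzkinAux in
/-- The Motzkin polynomial is not a sum of squares of polynomials in `ℝ[x,y]`. -/
theorem motzkin_not_sos : ¬ IsSumSq motzkin := by
  intro hsos
  obtain ⟨l, hl⟩ := isSumSq_exists hsos
  have hT : ∀ q ∈ l, ∀ β ∈ q.support, InT β := supp_T hl
  have hcoeff : ∀ m : Fin 2 →₀ ℕ,
      coeff m motzkin = (l.map (fun q => coeff m (q * q))).sum := by
    intro m
    rw [hl, coeff_list_sum, List.map_map]
    rfl
  -- Step 1 : coeff (0,3) vanishes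
  have s1 : ∀ q ∈ l, coeff (m2 0 3) q = 0 := by
    apply list_sq_zero
    have h0 : coeff (m2 0 6) motzkin = 0 := by simp [coeff_motzkin, m2_inj]
    rw [← h0, hcoeff (m2 0 6)]
    congr 1
    apply List.map_congr_left
    intro q hq
    exact ((coeffs_sq (hT q hq)).1).symm
  -- Step 2 : coeff (2,0) vanishes
  have s2 : ∀ q ∈ l, coeff (m2 2 0) q = 0 := by
    apply list_sq_zero
    have h0 : coeff (m2 4 0) motzkin = 0 := by simp [coeff_motzkin, m2_inj]
    rw [← h0, hcoeff (m2 4 0)]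
    congr 1
    apply List.map_congr_left
    intro q hq
    exact ((coeffs_sq (hT q hq)).2.1).symm
  -- Step 3 : coeff (0,2) vanishes
  have s3 : ∀ q ∈ l, coeff (m2 0 2) q = 0 := by
    apply list_sq_zero
    have h0 : coeff (m2 0 4) motzkin = 0 := by simp [coeff_motzkin, m2_inj]
    rw [← h0, hcoeff (m2 0 4)]
    congr 1
    apply List.map_congr_left
    intro q hq
    rw [(coeffs_sq (hT q hq)).2.2.1, s1 q hq]
    ring
  -- Step 4 : coeff (1,0) vanishes
  have s4 : ∀ q ∈ l, coeff (m2 1 0) q = 0 := by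
    apply list_sq_zero
    have h0 : coeff (m2 2 0) motzkin = 0 := by simp [coeff_motzkin, m2_inj]
    rw [← h0, hcoeff (m2 2 0)]
    congr 1
    apply List.map_congr_left
    intro q hq
    rw [(coeffs_sq (hT q hq)).2.2.2.1, s2 q hq]
    ring
  -- Step 5 : coeff (0,1) vanishes
  have s5 : ∀ q ∈ l, coeff (m2 0 1) q = 0 := by
    apply list_sq_zero
    have h0 : coeff (m2 0 2) motzkin = 0 := by simp [coeff_motzkin, m2_inj]
    rw [← h0, hcoeff (m2 0 2)]
    congr 1
    apply List.map_congr_left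
    intro q hq
    rw [(coeffs_sq (hT q hq)).2.2.2.2.1, s3 q hq]
    ring
  -- Final contradiction at (2,2)
  have h3 : coeff (m2 2 2) motzkin = -3 := by simp [coeff_motzkin, m2_inj]
  have hfin : (-3 : ℝ) = (l.map (fun q => coeff (m2 1 1) q * coeff (m2 1 1) q)).sum := by
    rw [← h3, hcoeff (m2 2 2)]
    congr 1
    apply List.map_congr_left
    intro q hq
    rw [(coeffs_sq (hT q hq)).2.2.2.2.2, s5 q hq, s4 q hq, s2 q hq]
    ring
  have hnn : 0 ≤ (l.map (fun q => coeff (m2 1 1) q * coeff (m2 1 1) q)).sum := by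
    apply List.sum_nonneg
    intro x hx
    simp only [List.mem_map] at hx
    obtain ⟨y, _, rfl⟩ := hx
    exact mul_self_nonneg _
  linarith [hfin ▸ hnn]
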